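/- If a metric space X is of countable asymptotic dimension, then for every set S of cardinality bigger than card(X × ℕ) and every ε > 0 there exists an (ε,ε)-Lipschitz partition of unity g : X → Δ(S) that is K-cobounded for some K > 0. -/

import Mathlib

universe u

/-- The `l¹` distance between two (finitely supported) functions `S → ℝ`,
modeling the metric of `Δ(S) ⊆ l¹(S)`. -/
noncomputable def l1dist {S : Type*} (φ ψ : S → ℝ) : ℝ := ∑ᶠ v, |φ v - ψ v|

/-- `φ` is a point of `Δ(S)`. -/
def IsDelta {S : Type*} (φ : S → ℝ) : Prop :=
  (∀ v, 0 ≤ φ v) ∧ (Function.support φ).Finite ∧ ∑ᶠ v, φ v = 1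

/-- `f` is a partition of unity on `A` with values in `Δ(S)`. -/
def PartUnityOn {X S : Type*} (f : X → S → ℝ) (A : Set X) : Prop :=
  ∀ a ∈ A, IsDelta (f a)

/-- `f` is `(ε,ε)`-Lipschitz on `A` (with respect to the `l¹` metric on `Δ(S)`). -/
def LipschitzEpsOn {X S : Type*} [MetricSpace X] (ε : ℝ) (f : X → S → ℝ) (A : Set X) : Prop :=
  ∀ x ∈ A, ∀ y ∈ A, l1dist (f x) (f y) ≤ ε * dist x y + ε

/-- `f` is `K`-cobounded on `A`. -/
def CoboundedOn {X S : Type*} [MetricSpace X] (K : ℝ) (f : X → S → ℝ) (A : Set X) : Prop :=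
  ∀ v : S, EMetric.diam {x ∈ A | 0 < f x v} ≤ ENNReal.ofReal K

/-- A family of subsets is `R`-disjoint if distinct members are at distance `> R`. -/
def RDisjointFam {X : Type*} [MetricSpace X] (R : ℝ) (𝒲 : Set (Set X)) : Prop :=
  ∀ U ∈ 𝒲, ∀ V ∈ 𝒲, U ≠ V → ∀ x ∈ U, ∀ y ∈ V, R < dist x y

/-- `𝒰` is uniformly bounded. -/
def UnifBounded {X : Type*} [MetricSpace X] (𝒰 : Set (Set X)) : Prop :=
  ∃ M : ℝ, 0 < M ∧ ∀ U ∈ 𝒰, EMetric.diam U ≤ ENNReal.ofReal M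

/-- `U` can be expressed as a union of at most `k` families from `𝒱` that are
`R`-disjoint. -/
def UnionOfFams {X : Type*} [MetricSpace X] (k : ℕ) (R : ℝ) (𝒱 : Set (Set X))
    (U : Set X) : Prop :=
  ∃ 𝒲 : Fin k → Set (Set X), (∀ j, 𝒲 j ⊆ 𝒱 ∧ RDisjointFam R (𝒲 j)) ∧
    U = ⋃ j, ⋃₀ 𝒲 j

/-- `X` is of countable asymptotic dimension (Definition 7.1). -/
def CountableAsdim (X : Type*) [MetricSpace X] : Prop :=
  ∃ nseq : ℕ → ℕ, (∀ i, 1 ≤ nseq i) ∧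
    ∀ R : ℕ → ℝ, (∀ i, 0 < R i) →
      ∃ 𝒱 : ℕ → Set (Set X), 𝒱 1 = {Set.univ} ∧
        (∀ i, 1 ≤ i → ∀ U ∈ 𝒱 i, UnionOfFams (nseq i) (R i) (𝒱 (i + 1)) U) ∧
        ∃ m, 1 ≤ m ∧ UnifBounded (𝒱 m)


namespace S15
open Classical in
noncomputable def _dummy : ℕ := 0
open Function Set Metric

variable {X : Type u} [MetricSpace X]

noncomputable def bump (sk : ℝ) (V : Set X) (x : X) : ℝ := max (sk - Metric.infDist x V) 0

noncomputable def sigmaF (C : Set (Set X)) (sk : ℝ) (x : X) : ℝ := ∑ᶠ V ∈ C, bump sk V x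

open Classical in
noncomputable def pF (C : Set (Set X)) (sk : ℝ) (V : Set X) (x : X) : ℝ :=
  if V ∈ C then bump sk V x / sigmaF C sk x else 0

lemma bump_nonneg (sk : ℝ) (V : Set X) (x : X) : 0 ≤ bump sk V x := le_max_right _ _

lemma bump_pos_iff {sk : ℝ} {V : Set X} {x : X} : 0 < bump sk V x ↔ infDist x V < sk := by
  simp [bump, lt_max_iff, sub_pos]

lemma bump_lip (sk : ℝ) (V : Set X) (x y : X) : |bump sk V x - bump sk V y| ≤ dist x y := by
  have h1 : |(sk - infDist x V) - (sk - infDist y V)| ≤ dist x y := by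
    have h2 : |infDist x V - infDist y V| ≤ dist x y := by
      rw [abs_sub_le_iff]
      constructor
      · linarith [Metric.infDist_le_infDist_add_dist (x := x) (y := y) (s := V)]
      · linarith [Metric.infDist_le_infDist_add_dist (x := y) (y := x) (s := V), dist_comm x y]
    calc |(sk - infDist x V) - (sk - infDist y V)| = |infDist y V - infDist x V| := by ring_nf
      _ ≤ dist x y := by rw [abs_sub_comm]; exact h2
  exact (abs_max_sub_max_le_abs _ _ _).trans h1

section Level

variable {C : Set (Set X)} {coln : Set X → ℕ} {nk : ℕ} {sk : ℝ}

/-- the set of active members at `x` -/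
def activeSet (C : Set (Set X)) (sk : ℝ) (x : X) : Set (Set X) :=
  {V | V ∈ C ∧ infDist x V < sk}

variable (hne : ∀ V ∈ C, V.Nonempty)
  (hsep : ∀ V ∈ C, ∀ W ∈ C, V ≠ W → coln V = coln W → ∀ v ∈ V, ∀ w ∈ W, 2 * sk < dist v w)
  (hcol : ∀ V ∈ C, coln V < nk)

include hne hsep in
lemma active_injOn (x : X) : Set.InjOn coln (activeSet C sk x) := by
  rintro V ⟨hVC, hVd⟩ W ⟨hWC, hWd⟩ hcoleq
  by_contra hVW
  obtain ⟨v, hv, hdv⟩ := (Metric.infDist_lt_iff (hne V hVC)).1 hVd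
  obtain ⟨w, hw, hdw⟩ := (Metric.infDist_lt_iff (hne W hWC)).1 hWd
  have := hsep V hVC W hWC hVW hcoleq v hv w hw
  have : dist v w ≤ dist v x + dist x w := dist_triangle _ _ _
  have := dist_comm x v
  linarith [hsep V hVC W hWC hVW hcoleq v hv w hw, dist_triangle v x w, dist_comm x v]

include hne hsep hcol in
lemma active_finite (x : X) : (activeSet C sk x).Finite := by
  have himg : (coln '' activeSet C sk x) ⊆ ↑(Finset.range nk) := by
    rintro j ⟨V, hV, rfl⟩; simp [hcol V hV.1]
  exact Set.Finite.of_finite_image (Set.Finite.subset (Finset.range nk).finite_toSet himg)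
    (active_injOn hne hsep x)

include hne hsep hcol in
lemma active_card (x : X) : ((active_finite hne hsep hcol x).toFinset).card ≤ nk := by
  classical
  have h1 : ((active_finite hne hsep hcol x).toFinset).card
      = ((active_finite hne hsep hcol x).toFinset.image coln).card := by
    rw [Finset.card_image_of_injOn]
    intro a ha b hb
    exact active_injOn hne hsep x (by simpa using ha) (by simpa using hb)
  rw [h1]
  have h2 : (active_finite hne hsep hcol x).toFinset.image coln ⊆ Finset.range nk := by
    intro j hj
    simp only [Finset.mem_image, Set.Finite.mem_toFinset] at hj
    obtain ⟨V, hV, rfl⟩ := hj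
    simp [hcol V hV.1]
  calc _ ≤ (Finset.range nk).card := Finset.card_le_card h2
    _ = nk := Finset.card_range nk

lemma support_subset_active (x : X) :
    C ∩ support (fun V => bump sk V x) ⊆ activeSet C sk x := by
  rintro V ⟨hVC, hVs⟩
  refine ⟨hVC, ?_⟩
  have : 0 < bump sk V x := lt_of_le_of_ne (bump_nonneg _ _ _) (Ne.symm hVs)
  exact bump_pos_iff.1 this

include hne hsep hcol in
lemma suppfin (x : X) : (C ∩ support (fun V => bump sk V x)).Finite :=
  (active_finite hne hsep hcol x).subset (support_subset_active x)

include hne hsep hcol in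
lemma sigma_nonneg (x : X) : 0 ≤ sigmaF C sk x := by
  rw [sigmaF, finsum_mem_eq_sum _ (suppfin hne hsep hcol x)]
  exact Finset.sum_nonneg fun V _ => bump_nonneg _ _ _

include hne hsep hcol in
lemma single_le_sigma {V : Set X} (hV : V ∈ C) (x : X) : bump sk V x ≤ sigmaF C sk x := by
  rcases eq_or_lt_of_le (bump_nonneg sk V x) with h | h
  · exact h ▸ sigma_nonneg hne hsep hcol x
  · rw [sigmaF, finsum_mem_eq_sum _ (suppfin hne hsep hcol x)]
    refine Finset.single_le_sum (f := fun V => bump sk V x)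
      (fun W _ => bump_nonneg _ _ _) ?_
    simp only [Set.Finite.mem_toFinset, Set.mem_inter_iff, mem_support]
    exact ⟨hV, ne_of_gt h⟩

include hne hsep hcol in
lemma sigma_ge {U : Set X} (hcover : ⋃₀ C = U) (hUne : U.Nonempty) {x : X}
    (hx : infDist x U < sk) : sk - infDist x U ≤ sigmaF C sk x := by
  refine le_of_forall_pos_le_add fun δ hδ => ?_
  obtain ⟨u, hu, hdu⟩ := (Metric.infDist_lt_iff hUne).1
    (show infDist x U < infDist x U + min δ (sk - infDist x U) by
      have : 0 < min δ (sk - infDist x U) := lt_min hδ (by linarith)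
      linarith)
  rw [← hcover] at hu
  obtain ⟨V, hVC, huV⟩ := hu
  have h1 : infDist x V ≤ dist x u := Metric.infDist_le_dist_of_mem huV
  have h2 : sk - infDist x U - δ ≤ bump sk V x := by
    have : sk - dist x u ≤ bump sk V x := by
      refine le_trans ?_ (le_max_left _ _); linarith
    have hmin : min δ (sk - infDist x U) ≤ δ := min_le_left _ _
    linarith
  linarith [single_le_sigma hne hsep hcol hVC x]

include hne hsep hcol in
lemma sum_p_eq_one {x : X} (hσ : 0 < sigmaF C sk x) : ∑ᶠ V ∈ C, pF C sk V x = 1 := by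
  have h1 : ∀ V ∈ C, pF C sk V x = bump sk V x / sigmaF C sk x := by
    intro V hV; classical rw [pF, if_pos hV]
  rw [finsum_mem_congr rfl h1]
  have hfin : (C ∩ support (fun V => bump sk V x / sigmaF C sk x)).Finite := by
    refine (suppfin hne hsep hcol x).subset (Set.inter_subset_inter_right _ ?_)
    intro V hV
    simp only [mem_support] at hV ⊢
    intro h0; rw [h0] at hV; simpa using hV
  rw [finsum_mem_eq_sum _ hfin, ← Finset.sum_div]
  rw [div_eq_one_iff_eq (ne_of_gt hσ)]
  have hσeq : sigmaF C sk x = ∑ V ∈ (suppfin hne hsep hcol x).toFinset, bump sk V x :=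
    finsum_mem_eq_sum _ _
  conv_rhs => rw [hσeq]
  refine Finset.sum_congr ?_ (fun _ _ => rfl)
  ext V
  simp only [Set.Finite.mem_toFinset, Set.mem_inter_iff, mem_support]
  constructor
  · rintro ⟨h1', h2⟩
    exact ⟨h1', fun h0 => h2 (by rw [h0, zero_div])⟩
  · rintro ⟨h1', h2⟩
    refine ⟨h1', fun h0 => h2 ?_⟩
    rcases div_eq_zero_iff.1 h0 with h|h
    · exact h
    · exact absurd h (ne_of_gt hσ)


include hne hsep hcol in
lemma sum_p_le_one (x : X) : ∑ᶠ V ∈ C, pF C sk V x ≤ 1 := by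
  rcases le_or_gt (sigmaF C sk x) 0 with h | h
  · have hz : ∀ V ∈ C, pF C sk V x = 0 := by
      intro V hV
      have hb0 : bump sk V x = 0 :=
        le_antisymm ((single_le_sigma hne hsep hcol hV x).trans h) (bump_nonneg _ _ _)
      classical
      rw [pF, if_pos hV, hb0, zero_div]
    rw [finsum_mem_congr rfl hz]
    simp
  · exact le_of_eq (sum_p_eq_one hne hsep hcol h)

lemma p_nonneg (hσ : 0 ≤ sigmaF C sk x) (V : Set X) : 0 ≤ pF C sk V x := by
  classical
  rw [pF]
  split
  · exact div_nonneg (bump_nonneg _ _ _) hσ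
  · exact le_refl 0

lemma p_pos {V : Set X} {x : X} (h : 0 < pF C sk V x) : V ∈ C ∧ infDist x V < sk := by
  classical
  rw [pF] at h
  split at h
  · rename_i hVC
    refine ⟨hVC, bump_pos_iff.1 ?_⟩
    by_contra hb
    push_neg at hb
    have : bump sk V x = 0 := le_antisymm hb (bump_nonneg _ _ _)
    rw [this, zero_div] at h
    exact lt_irrefl 0 h
  · exact absurd h (lt_irrefl 0)

/-- helper: replace a `finsum` over a set by a Finset sum -/
lemma finsum_mem_eq_sum_sup {ι : Type*} {f : ι → ℝ} {s : Set ι} {F : Finset ι}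
    (hF : ↑F ⊆ s) (h : s ∩ support f ⊆ ↑F) : ∑ᶠ i ∈ s, f i = ∑ i ∈ F, f i := by
  have hfin : (s ∩ support f).Finite := F.finite_toSet.subset h
  rw [finsum_mem_eq_sum f hfin]
  refine Finset.sum_subset ?_ ?_
  · intro i hi
    simp only [Set.Finite.mem_toFinset] at hi
    exact_mod_cast h hi
  · intro i hiF hi
    simp only [Set.Finite.mem_toFinset, Set.mem_inter_iff, mem_support, not_and, not_not] at hi
    exact hi (hF hiF)

section CoreLip

include hne hsep hcol

noncomputable def bigF (hne : ∀ V ∈ C, V.Nonempty)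
    (hsep : ∀ V ∈ C, ∀ W ∈ C, V ≠ W → coln V = coln W → ∀ v ∈ V, ∀ w ∈ W, 2 * sk < dist v w)
    (hcol : ∀ V ∈ C, coln V < nk) (x y : X) : Finset (Set X) :=
  ((active_finite hne hsep hcol x).union (active_finite hne hsep hcol y)).toFinset

lemma bigF_subset (x y : X) : ↑(bigF hne hsep hcol x y) ⊆ C := by
  intro V hV
  simp only [bigF, Set.Finite.coe_toFinset, Set.mem_union] at hV
  rcases hV with h | h
  · exact h.1
  · exact h.1

lemma bigF_card (x y : X) : (bigF hne hsep hcol x y).card ≤ 2 * nk := by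
  classical
  have h1 := active_card hne hsep hcol (nk := nk) x
  have h2 := active_card hne hsep hcol (nk := nk) y
  have e1 : (activeSet C sk x ∪ activeSet C sk y).ncard = (bigF hne hsep hcol x y).card :=
    Set.ncard_eq_toFinset_card _ ((active_finite hne hsep hcol x).union (active_finite hne hsep hcol y))
  have e2 : (activeSet C sk x ∪ activeSet C sk y).ncard
      ≤ (activeSet C sk x).ncard + (activeSet C sk y).ncard :=
    Set.ncard_union_le _ _
  have e3 : (activeSet C sk x).ncard = (active_finite hne hsep hcol x).toFinset.card :=
    Set.ncard_eq_toFinset_card _ _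
  have e4 : (activeSet C sk y).ncard = (active_finite hne hsep hcol y).toFinset.card :=
    Set.ncard_eq_toFinset_card _ _
  omega

lemma bump_supp_bigF_x (x y : X) :
    C ∩ support (fun V => bump sk V x) ⊆ ↑(bigF hne hsep hcol x y) := by
  intro V hV
  simp only [bigF, Set.Finite.coe_toFinset, Set.mem_union]
  exact Or.inl (support_subset_active x hV)

lemma bump_supp_bigF_y (x y : X) :
    C ∩ support (fun V => bump sk V y) ⊆ ↑(bigF hne hsep hcol x y) := by
  intro V hV
  simp only [bigF, Set.Finite.coe_toFinset, Set.mem_union]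
  exact Or.inr (support_subset_active y hV)

lemma sigma_eq_bigF_x (x y : X) : sigmaF C sk x = ∑ V ∈ bigF hne hsep hcol x y, bump sk V x :=
  finsum_mem_eq_sum_sup (bigF_subset hne hsep hcol x y) (bump_supp_bigF_x hne hsep hcol x y)

lemma sigma_eq_bigF_y (x y : X) : sigmaF C sk y = ∑ V ∈ bigF hne hsep hcol x y, bump sk V y :=
  finsum_mem_eq_sum_sup (bigF_subset hne hsep hcol x y) (bump_supp_bigF_y hne hsep hcol x y)

lemma sum_bump_diff_le (x y : X) :
    ∑ V ∈ bigF hne hsep hcol x y, |bump sk V x - bump sk V y| ≤ (2 * nk) * dist x y := by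
  calc ∑ V ∈ bigF hne hsep hcol x y, |bump sk V x - bump sk V y|
      ≤ ∑ _V ∈ bigF hne hsep hcol x y, dist x y :=
        Finset.sum_le_sum fun V _ => bump_lip sk V x y
    _ = (bigF hne hsep hcol x y).card * dist x y := by
        rw [Finset.sum_const, nsmul_eq_mul]
    _ ≤ (2 * nk) * dist x y := by
        have h2 := bigF_card hne hsep hcol x y
        have : ((bigF hne hsep hcol x y).card : ℝ) ≤ (2 * nk : ℕ) := by exact_mod_cast h2
        have hd : (0:ℝ) ≤ dist x y := dist_nonneg
        push_cast at this ⊢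
        nlinarith

/-- The key Lipschitz estimate for the normalized partition at one level. -/
lemma core_lip (x y : X) {b : ℝ} (hb : 0 < b) (hbσ : b ≤ sigmaF C sk x) (hσy : 0 < sigmaF C sk y) :
    ∑ᶠ V ∈ C, |pF C sk V x - pF C sk V y| ≤ (4 * nk / b) * dist x y := by
  classical
  set F := bigF hne hsep hcol x y with hF
  have hσx : 0 < sigmaF C sk x := lt_of_lt_of_le hb hbσ
  have hps : C ∩ support (fun V => |pF C sk V x - pF C sk V y|) ⊆ ↑F := by
    intro V ⟨hVC, hVs⟩
    simp only [mem_support] at hVs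
    have : bump sk V x ≠ 0 ∨ bump sk V y ≠ 0 := by
      by_contra hc
      push_neg at hc
      apply hVs
      rw [pF, pF, if_pos hVC, if_pos hVC, hc.1, hc.2, zero_div, zero_div, sub_zero, abs_zero]
    rcases this with h | h
    · exact bump_supp_bigF_x hne hsep hcol x y ⟨hVC, h⟩
    · exact bump_supp_bigF_y hne hsep hcol x y ⟨hVC, h⟩
  rw [finsum_mem_eq_sum_sup (bigF_subset hne hsep hcol x y) hps]
  set A := ∑ V ∈ F, |bump sk V x - bump sk V y| with hA
  have hA0 : 0 ≤ A := Finset.sum_nonneg fun V _ => abs_nonneg _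
  have hσdiff : |sigmaF C sk y - sigmaF C sk x| ≤ A := by
    rw [sigma_eq_bigF_x hne hsep hcol x y, sigma_eq_bigF_y hne hsep hcol x y,
      ← Finset.sum_sub_distrib]
    refine (Finset.abs_sum_le_sum_abs _ _).trans ?_
    refine le_of_eq (Finset.sum_congr rfl fun V _ => ?_)
    rw [abs_sub_comm]
  have hptwise : ∀ V ∈ F, |pF C sk V x - pF C sk V y|
      ≤ |bump sk V x - bump sk V y| / sigmaF C sk x
        + (bump sk V y / sigmaF C sk y) * (|sigmaF C sk y - sigmaF C sk x| / sigmaF C sk x) := by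
    intro V hVF
    have hVC : V ∈ C := bigF_subset hne hsep hcol x y hVF
    rw [pF, pF, if_pos hVC, if_pos hVC]
    have key : bump sk V x / sigmaF C sk x - bump sk V y / sigmaF C sk y
        = (bump sk V x - bump sk V y) / sigmaF C sk x
          + (bump sk V y / sigmaF C sk y) * ((sigmaF C sk y - sigmaF C sk x) / sigmaF C sk x) := by
      field_simp
      ring
    rw [key]
    refine (abs_add_le _ _).trans ?_
    gcongr
    · rw [abs_div, abs_of_pos hσx]
    · rw [abs_mul, abs_div, abs_div, abs_of_pos hσx, abs_of_pos hσy,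
        abs_of_nonneg (bump_nonneg sk V y)]
  calc ∑ V ∈ F, |pF C sk V x - pF C sk V y|
      ≤ ∑ V ∈ F, (|bump sk V x - bump sk V y| / sigmaF C sk x
        + (bump sk V y / sigmaF C sk y) * (|sigmaF C sk y - sigmaF C sk x| / sigmaF C sk x)) :=
        Finset.sum_le_sum hptwise
    _ = A / sigmaF C sk x
        + (∑ V ∈ F, bump sk V y) / sigmaF C sk y * (|sigmaF C sk y - sigmaF C sk x| / sigmaF C sk x) := by
        rw [Finset.sum_add_distrib, ← Finset.sum_div, ← hA]
        congr 1
        rw [← Finset.sum_mul, ← Finset.sum_div]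
    _ ≤ A / sigmaF C sk x + 1 * (A / sigmaF C sk x) := by
        have h1 : (∑ V ∈ F, bump sk V y) = sigmaF C sk y := (sigma_eq_bigF_y hne hsep hcol x y).symm
        rw [h1, div_self (ne_of_gt hσy), one_mul, one_mul]
        have h2 : |sigmaF C sk y - sigmaF C sk x| / sigmaF C sk x ≤ A / sigmaF C sk x := by
          gcongr
        linarith
    _ = 2 * A / sigmaF C sk x := by ring
    _ ≤ 2 * A / b := by gcongr
    _ ≤ 2 * ((2 * nk) * dist x y) / b := by
        gcongr
        exact sum_bump_diff_le hne hsep hcol x y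
    _ = (4 * nk / b) * dist x y := by ring

end CoreLip

end Level

/-! ### helpers for finsum -/

lemma my_finsum_le {ι : Type*} {f g : ι → ℝ} (h : ∀ i, f i ≤ g i)
    (hf : (support f).Finite) (hg : (support g).Finite) : ∑ᶠ i, f i ≤ ∑ᶠ i, g i := by
  classical
  have hFf : support f ⊆ ↑(hf.union hg).toFinset := by
    intro i hi; simp only [Set.Finite.coe_toFinset]; exact Or.inl hi
  have hFg : support g ⊆ ↑(hf.union hg).toFinset := by
    intro i hi; simp only [Set.Finite.coe_toFinset]; exact Or.inr hi
  rw [finsum_eq_sum_of_support_subset f hFf, finsum_eq_sum_of_support_subset g hFg]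
  exact Finset.sum_le_sum fun i _ => h i

lemma my_finsum_nonneg {ι : Type*} {f : ι → ℝ} (h : ∀ i, 0 ≤ f i) : 0 ≤ ∑ᶠ i, f i :=
  finsum_nonneg h

/-! ### chains -/

/-- tuples of `j` sets -/
def Tup (X : Type u) : ℕ → Type u := fun j => Nat.rec PUnit (fun _ ih => Set X × ih) j

instance instUniqueTup0 {X : Type u} : Unique (Tup X 0) := inferInstanceAs (Unique PUnit.{u+1})
instance instFiniteTup0 {X : Type u} : Finite (Tup X 0) := inferInstanceAs (Finite PUnit.{u+1})

variable (child : ℕ → Set X → Set (Set X)) (p : ℕ → Set X → Set X → X → ℝ)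

/-- the product of the transition functions along a chain -/
def Gfun : (j : ℕ) → ℕ → Set X → X → Tup X j → ℝ
  | 0, _, _, _, _ => 1
  | j+1, k, U, x, c => p k U c.1 x * Gfun j (k+1) c.1 x c.2

@[simp] lemma Gfun_zero (k : ℕ) (U : Set X) (x : X) (c : Tup X 0) :
    Gfun p 0 k U x c = 1 := rfl

@[simp] lemma Gfun_succ (j k : ℕ) (U : Set X) (x : X) (c : Tup X (j+1)) :
    Gfun p (j+1) k U x c = p k U c.1 x * Gfun p j (k+1) c.1 x c.2 := rfl

/-- the last set of a chain (or `U` for the empty chain) -/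
def lastSet : (j : ℕ) → Set X → Tup X j → Set X
  | 0, U, _ => U
  | j+1, _, c => lastSet j c.1 c.2

/-- validity of a chain -/
def ValidT : (j : ℕ) → ℕ → Set X → Tup X j → Prop
  | 0, _, _, _ => True
  | j+1, k, U, c => c.1 ∈ child k U ∧ ValidT j (k+1) c.1 c.2

section ChainLemmas

variable {child} {p}
variable {good : ℕ → Set X → Prop} {s t : ℕ → ℝ} {Λ E : ℕ → ℝ} {d₀ : ℝ}

variable (hclosed : ∀ k U V, good k U → V ∈ child k U → good (k+1) V)
  (hp0 : ∀ k U V x, 0 ≤ p k U V x)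
  (hp_supp : ∀ k U V x, p k U V x ≠ 0 → V ∈ child k U ∧ infDist x V < s k)
  (hp_fin : ∀ k U x, good k U → (support (fun V => p k U V x)).Finite)
  (hp_sum_le : ∀ k U x, good k U → ∑ᶠ V, p k U V x ≤ 1)
  (hp_sum_eq : ∀ k U x, good k U → infDist x U ≤ t k → ∑ᶠ V, p k U V x = 1)
  (hst : ∀ k, s k ≤ t (k+1))
  (hp_lip : ∀ k U x y, good k U → dist x y ≤ d₀ → infDist x U ≤ t k →
      ∑ᶠ V, |p k U V x - p k U V y| ≤ Λ k * dist x y)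
  (hE : ∀ k, Λ k + E (k+1) ≤ E k)
  (hE0 : ∀ k, 0 ≤ E k)

include hp0 in
lemma G_nonneg : ∀ (j k : ℕ) (U : Set X) (x : X) (c : Tup X j), 0 ≤ Gfun p j k U x c := by
  intro j
  induction j with
  | zero => intro k U x c; rw [Gfun_zero]; exact zero_le_one
  | succ j ih => intro k U x c; rw [Gfun_succ]; exact mul_nonneg (hp0 _ _ _ _) (ih _ _ _ _)

include hclosed hp_supp hp_fin in
lemma G_finsupp : ∀ (j k : ℕ) (U : Set X) (x : X), good k U →
    (support (fun c : Tup X j => Gfun p j k U x c)).Finite := by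
  intro j
  induction j with
  | zero => intro k U x _; exact (Set.finite_univ (α := Tup X 0)).subset (Set.subset_univ _)

  | succ j ih =>
      intro k U x hU
      have hsub : support (fun c : Tup X (j+1) => Gfun p (j+1) k U x c)
          ⊆ ⋃ V ∈ support (fun V => p k U V x),
              (fun c' : Tup X j => ((V, c') : Tup X (j+1))) '' support (fun c' => Gfun p j (k+1) V x c') := by
        rintro ⟨V, c'⟩ hc
        replace hc : p k U V x * Gfun p j (k+1) V x c' ≠ 0 := hc
        rw [mul_ne_zero_iff] at hc
        refine Set.mem_biUnion (show V ∈ support fun V => p k U V x from hc.1) ?_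
        exact ⟨c', hc.2, rfl⟩
      refine Set.Finite.subset ?_ hsub
      refine Set.Finite.biUnion (hp_fin k U x hU) ?_
      intro V hV
      have hgood : good (k+1) V := hclosed k U V hU (hp_supp k U V x hV).1
      exact (ih (k+1) V x hgood).image _

include hclosed hp0 hp_supp hp_fin hp_sum_le in
lemma G_sum_le_one : ∀ (j k : ℕ) (U : Set X) (x : X), good k U →
    ∑ᶠ c : Tup X j, Gfun p j k U x c ≤ 1 := by
  intro j
  induction j with
  | zero =>
      intro k U x _
      rw [show (∑ᶠ c : Tup X 0, Gfun p 0 k U x c) = 1 from finsum_unique _]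
  | succ j ih =>
      intro k U x hU
      have hfin := G_finsupp hclosed hp_supp hp_fin (j+1) k U x hU
      have hcur : ∑ᶠ c : Tup X (j+1), Gfun p (j+1) k U x c
          = ∑ᶠ V : Set X, ∑ᶠ c' : Tup X j, p k U V x * Gfun p j (k+1) V x c' :=
        finsum_curry _ hfin
      rw [hcur]
      have h1 : ∀ V : Set X, ∑ᶠ c' : Tup X j, p k U V x * Gfun p j (k+1) V x c'
          = p k U V x * ∑ᶠ c' : Tup X j, Gfun p j (k+1) V x c' := by
        intro V
        by_cases hpV : p k U V x = 0
        · simp [hpV]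
        · have hgood : good (k+1) V := hclosed k U V hU (hp_supp k U V x hpV).1
          exact (mul_finsum' _ _ (G_finsupp hclosed hp_supp hp_fin j (k+1) V x hgood)).symm
      rw [finsum_congr h1]
      calc ∑ᶠ V : Set X, p k U V x * ∑ᶠ c' : Tup X j, Gfun p j (k+1) V x c'
          ≤ ∑ᶠ V : Set X, p k U V x := by
            refine my_finsum_le ?_ ?_ (hp_fin k U x hU)
            · intro V
              by_cases hpV : p k U V x = 0
              · simp [hpV]
              · have hgood : good (k+1) V := hclosed k U V hU (hp_supp k U V x hpV).1
                have h2 := ih (k+1) V x hgood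
                have h3 : 0 ≤ p k U V x := hp0 k U V x
                nlinarith
            · refine (hp_fin k U x hU).subset ?_
              intro V hV
              simp only [mem_support] at hV ⊢
              intro h0; rw [h0, zero_mul] at hV; exact hV rfl
        _ ≤ 1 := hp_sum_le k U x hU

include hclosed hp0 hp_supp hp_fin hp_sum_eq hst in
lemma G_sum_eq_one : ∀ (j k : ℕ) (U : Set X) (x : X), good k U → infDist x U ≤ t k →
    ∑ᶠ c : Tup X j, Gfun p j k U x c = 1 := by
  intro j
  induction j with
  | zero => intro k U x _ _; exact finsum_unique _
  | succ j ih =>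
      intro k U x hU hxU
      have hfin := G_finsupp hclosed hp_supp hp_fin (j+1) k U x hU
      have hcur : ∑ᶠ c : Tup X (j+1), Gfun p (j+1) k U x c
          = ∑ᶠ V : Set X, ∑ᶠ c' : Tup X j, p k U V x * Gfun p j (k+1) V x c' :=
        finsum_curry _ hfin
      rw [hcur]
      have h1 : ∀ V : Set X, ∑ᶠ c' : Tup X j, p k U V x * Gfun p j (k+1) V x c'
          = p k U V x := by
        intro V
        by_cases hpV : p k U V x = 0
        · simp [hpV]
        · obtain ⟨hVc, hVd⟩ := hp_supp k U V x hpV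
          have hgood : good (k+1) V := hclosed k U V hU hVc
          have hd : infDist x V ≤ t (k+1) := le_trans (le_of_lt hVd) (hst k)
          rw [(mul_finsum' _ _ (G_finsupp hclosed hp_supp hp_fin j (k+1) V x hgood)).symm,
            ih (k+1) V x hgood hd, mul_one]
      rw [finsum_congr h1]
      exact hp_sum_eq k U x hU hxU

include hp_supp in
lemma G_valid : ∀ (j k : ℕ) (U : Set X) (x : X) (c : Tup X j),
    Gfun p j k U x c ≠ 0 → ValidT child j k U c := by
  intro j
  induction j with
  | zero => intro k U x c _; trivial
  | succ j ih =>
      intro k U x c hc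
      rw [Gfun_succ, mul_ne_zero_iff] at hc
      exact ⟨(hp_supp k U c.1 x hc.1).1, ih (k+1) c.1 x c.2 hc.2⟩

include hclosed in
lemma last_good : ∀ (j k : ℕ) (U : Set X) (c : Tup X j), good k U → ValidT child j k U c →
    good (k+j) (lastSet j U c) := by
  intro j
  induction j with
  | zero => intro k U c hU _; exact hU
  | succ j ih =>
      intro k U c hU hv
      have h1 : good (k+1) c.1 := hclosed k U c.1 hU hv.1
      have h2 := ih (k+1) c.1 c.2 h1 hv.2
      have : k + 1 + j = k + (j+1) := by omega
      rw [this] at h2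
      exact h2

include hp_supp in
lemma G_last_loc :
    ∀ (j k : ℕ) (U : Set X) (x : X) (c : Tup X (j+1)),
    Gfun p (j+1) k U x c ≠ 0 → infDist x (lastSet (j+1) U c) < s (k + j) := by
  intro j
  induction j with
  | zero =>
      intro k U x c hc
      rw [Gfun_succ, mul_ne_zero_iff] at hc
      exact (hp_supp k U c.1 x hc.1).2
  | succ j ih =>
      intro k U x c hc
      rw [Gfun_succ, mul_ne_zero_iff] at hc
      have := ih (k+1) c.1 x c.2 hc.2
      have heq : k + 1 + j = k + (j+1) := by omega
      rw [heq] at this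
      exact this

include hclosed hp0 hp_supp hp_fin hp_sum_le hst hp_lip hE hE0 in
lemma G_lip : ∀ (j k : ℕ) (U : Set X) (x y : X), good k U → dist x y ≤ d₀ →
    infDist x U ≤ t k →
    ∑ᶠ c : Tup X j, |Gfun p j k U x c - Gfun p j k U y c| ≤ E k * dist x y := by
  intro j
  induction j with
  | zero =>
      intro k U x y _ _ _
      have h1 : (fun c : Tup X 0 => |Gfun p 0 k U x c - Gfun p 0 k U y c|) = fun _ => 0 := by
        funext c; rw [Gfun_zero, Gfun_zero, sub_self, abs_zero]
      rw [h1, finsum_unique]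
      exact mul_nonneg (hE0 k) dist_nonneg
  | succ j ih =>
      intro k U x y hU hdxy hxU
      have hfinx := G_finsupp hclosed hp_supp hp_fin (j+1) k U x hU
      have hfiny := G_finsupp hclosed hp_supp hp_fin (j+1) k U y hU
      have habs_supp : ∀ {α : Type u} (f g : α → ℝ), (support f).Finite → (support g).Finite →
          (support fun c => |f c - g c|).Finite := by
        intro α f g hf hg
        refine (hf.union hg).subset ?_
        intro c hc
        simp only [mem_support, Set.mem_union] at hc ⊢
        by_contra hcon
        push_neg at hcon
        rw [hcon.1, hcon.2, sub_self, abs_zero] at hc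
        exact hc rfl
      have hfin : (support fun c : Tup X (j+1) =>
          |Gfun p (j+1) k U x c - Gfun p (j+1) k U y c|).Finite :=
        habs_supp _ _ hfinx hfiny
      have hcur : ∑ᶠ c : Tup X (j+1), |Gfun p (j+1) k U x c - Gfun p (j+1) k U y c|
          = ∑ᶠ V : Set X, ∑ᶠ c' : Tup X j, |p k U V x * Gfun p j (k+1) V x c'
              - p k U V y * Gfun p j (k+1) V y c'| :=
        finsum_curry _ hfin
      rw [hcur]
      set D := fun V : Set X => |p k U V x - p k U V y|
        + p k U V y * (E (k+1) * dist x y) with hD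
      have hinner : ∀ V : Set X,
          (∑ᶠ c' : Tup X j, |p k U V x * Gfun p j (k+1) V x c'
            - p k U V y * Gfun p j (k+1) V y c'|) ≤ D V := by
        intro V
        by_cases hV0 : p k U V x = 0 ∧ p k U V y = 0
        · have hz : (fun c' : Tup X j => |p k U V x * Gfun p j (k+1) V x c'
              - p k U V y * Gfun p j (k+1) V y c'|) = fun _ => 0 := by
            funext c'; rw [hV0.1, hV0.2, zero_mul, zero_mul, sub_self, abs_zero]
          rw [hz, finsum_zero, hD]
          have h1 := hp0 k U V y
          have h2 := hE0 (k+1)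
          have h3 : (0:ℝ) ≤ dist x y := dist_nonneg
          positivity
        · have hgood : good (k+1) V := by
            rcases not_and_or.1 hV0 with h | h
            · exact hclosed k U V hU (hp_supp k U V x h).1
            · exact hclosed k U V hU (hp_supp k U V y h).1
          have hfinVx := G_finsupp hclosed hp_supp hp_fin j (k+1) V x hgood
          have hfinVy := G_finsupp hclosed hp_supp hp_fin j (k+1) V y hgood
          have hfd := habs_supp _ _ hfinVx hfinVy
          have hfa : (support fun c' : Tup X j =>
              |p k U V x - p k U V y| * Gfun p j (k+1) V x c').Finite := by
            refine hfinVx.subset ?_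
            intro c' hc'
            simp only [mem_support] at hc' ⊢
            intro h0; rw [h0, mul_zero] at hc'; exact hc' rfl
          have hfb : (support fun c' : Tup X j =>
              p k U V y * |Gfun p j (k+1) V x c' - Gfun p j (k+1) V y c'|).Finite := by
            refine hfd.subset ?_
            intro c' hc'
            simp only [mem_support] at hc' ⊢
            intro h0; rw [h0, mul_zero] at hc'; exact hc' rfl
          have hstep1 : (∑ᶠ c' : Tup X j, |p k U V x * Gfun p j (k+1) V x c'
              - p k U V y * Gfun p j (k+1) V y c'|)
              ≤ ∑ᶠ c' : Tup X j, (|p k U V x - p k U V y| * Gfun p j (k+1) V x c'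
                + p k U V y * |Gfun p j (k+1) V x c' - Gfun p j (k+1) V y c'|) := by
            refine my_finsum_le ?_ ?_ (hfa.union hfb |>.subset ?_)
            · intro c'
              have e : p k U V x * Gfun p j (k+1) V x c' - p k U V y * Gfun p j (k+1) V y c'
                  = (p k U V x - p k U V y) * Gfun p j (k+1) V x c'
                    + p k U V y * (Gfun p j (k+1) V x c' - Gfun p j (k+1) V y c') := by ring
              rw [e]
              refine (abs_add_le _ _).trans ?_
              rw [abs_mul, abs_mul, abs_of_nonneg (G_nonneg hp0 j (k+1) V x c'),
                abs_of_nonneg (hp0 k U V y)]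
            · refine habs_supp _ _ ?_ ?_
              · refine hfinVx.subset ?_
                intro c' hc'
                simp only [mem_support] at hc' ⊢
                intro h0; rw [h0, mul_zero] at hc'; exact hc' rfl
              · refine hfinVy.subset ?_
                intro c' hc'
                simp only [mem_support] at hc' ⊢
                intro h0; rw [h0, mul_zero] at hc'; exact hc' rfl
            · intro c' hc'
              simp only [mem_support, Set.mem_union] at hc' ⊢
              by_contra hcon
              push_neg at hcon
              rw [hcon.1, hcon.2, add_zero] at hc'
              exact hc' rfl
          have hstep2 : (∑ᶠ c' : Tup X j, (|p k U V x - p k U V y| * Gfun p j (k+1) V x c'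
                + p k U V y * |Gfun p j (k+1) V x c' - Gfun p j (k+1) V y c'|))
              = |p k U V x - p k U V y| * (∑ᶠ c' : Tup X j, Gfun p j (k+1) V x c')
                + p k U V y * (∑ᶠ c' : Tup X j,
                    |Gfun p j (k+1) V x c' - Gfun p j (k+1) V y c'|) := by
            rw [finsum_add_distrib hfa hfb, mul_finsum' _ _ hfinVx, mul_finsum' _ _ hfd]
          have hSx0 : 0 ≤ ∑ᶠ c' : Tup X j, Gfun p j (k+1) V x c' :=
            finsum_nonneg fun c' => G_nonneg hp0 j (k+1) V x c'
          have hSx1 : (∑ᶠ c' : Tup X j, Gfun p j (k+1) V x c') ≤ 1 :=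
            G_sum_le_one hclosed hp0 hp_supp hp_fin hp_sum_le j (k+1) V x hgood
          have hrec : p k U V y * (∑ᶠ c' : Tup X j,
              |Gfun p j (k+1) V x c' - Gfun p j (k+1) V y c'|)
              ≤ p k U V y * (E (k+1) * dist x y) := by
            by_cases hpy : p k U V y = 0
            · rw [hpy, zero_mul, zero_mul]
            · have hyV : infDist y V ≤ t (k+1) :=
                le_trans (le_of_lt (hp_supp k U V y hpy).2) (hst k)
              have hdyx : dist y x ≤ d₀ := by rwa [dist_comm]
              have h2 := ih (k+1) V y x hgood hdyx hyV
              have heqf : (fun c' : Tup X j => |Gfun p j (k+1) V x c' - Gfun p j (k+1) V y c'|)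
                  = fun c' => |Gfun p j (k+1) V y c' - Gfun p j (k+1) V x c'| := by
                funext c'; rw [abs_sub_comm]
              rw [heqf]
              rw [dist_comm y x] at h2
              exact mul_le_mul_of_nonneg_left h2 (hp0 k U V y)
          calc (∑ᶠ c' : Tup X j, |p k U V x * Gfun p j (k+1) V x c'
                - p k U V y * Gfun p j (k+1) V y c'|)
              ≤ _ := hstep1
            _ = _ := hstep2
            _ ≤ |p k U V x - p k U V y| * 1 + p k U V y * (E (k+1) * dist x y) := by
                have hmul := mul_le_mul_of_nonneg_left hSx1 (abs_nonneg (p k U V x - p k U V y))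
                linarith [hrec]
            _ = D V := by rw [hD]; ring
      have hfpx := hp_fin k U x hU
      have hfpy := hp_fin k U y hU
      have hDsupp : (support D).Finite := by
        refine (hfpx.union hfpy).subset ?_
        intro V hV
        simp only [mem_support, Set.mem_union] at hV ⊢
        by_contra hcon
        push_neg at hcon
        rw [hD] at hV
        simp only [hcon.1, hcon.2, sub_self, abs_zero, zero_mul, add_zero] at hV
        exact hV rfl
      have houter : (∑ᶠ V : Set X, ∑ᶠ c' : Tup X j, |p k U V x * Gfun p j (k+1) V x c'
            - p k U V y * Gfun p j (k+1) V y c'|) ≤ ∑ᶠ V : Set X, D V := by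
        refine my_finsum_le hinner ?_ hDsupp
        refine (hfpx.union hfpy).subset ?_
        intro V hV
        simp only [mem_support, Set.mem_union] at hV ⊢
        by_contra hcon
        push_neg at hcon
        have hz : (fun c' : Tup X j => |p k U V x * Gfun p j (k+1) V x c'
            - p k U V y * Gfun p j (k+1) V y c'|) = fun _ => 0 := by
          funext c'; rw [hcon.1, hcon.2, zero_mul, zero_mul, sub_self, abs_zero]
        rw [hz, finsum_zero] at hV
        exact hV rfl
      refine houter.trans ?_
      have habsd : (support fun V => |p k U V x - p k U V y|).Finite := by
        refine (hfpx.union hfpy).subset ?_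
        intro V hV
        simp only [mem_support, Set.mem_union] at hV ⊢
        by_contra hcon
        push_neg at hcon
        rw [hcon.1, hcon.2, sub_self, abs_zero] at hV
        exact hV rfl
      have hfmul : (support fun V => p k U V y * (E (k+1) * dist x y)).Finite := by
        refine hfpy.subset ?_
        intro V hV
        simp only [mem_support] at hV ⊢
        intro h0; rw [h0, zero_mul] at hV; exact hV rfl
      have hDsum : (∑ᶠ V : Set X, D V)
          = (∑ᶠ V : Set X, |p k U V x - p k U V y|)
            + (∑ᶠ V : Set X, p k U V y) * (E (k+1) * dist x y) := by
        rw [hD, finsum_add_distrib habsd hfmul, finsum_mul' _ _ hfpy]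
      rw [hDsum]
      have h1 := hp_lip k U x y hU hdxy hxU
      have h2 := hp_sum_le k U y hU
      have h3 : (0:ℝ) ≤ E (k+1) * dist x y := mul_nonneg (hE0 (k+1)) dist_nonneg
      have h4 := hE k
      have h5 : (0:ℝ) ≤ dist x y := dist_nonneg
      have h6 : (∑ᶠ V : Set X, p k U V y) * (E (k+1) * dist x y) ≤ E (k+1) * dist x y := by
        nlinarith
      nlinarith


/-! ### injectivity of chain addresses -/

def chainF (tag : ℕ → Set X → Set X → X × ℕ) : (j : ℕ) → ℕ → Set X → Tup X j → List (X × ℕ)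
  | 0, _, _, _ => []
  | j+1, k, U, c => tag k U c.1 :: chainF tag j (k+1) c.1 c.2

include hclosed in
lemma chainF_inj {tag : ℕ → Set X → Set X → X × ℕ}
    (htag : ∀ k U V W, good k U → V ∈ child k U → W ∈ child k U →
      tag k U V = tag k U W → V = W) :
    ∀ (j k : ℕ) (U : Set X), good k U → ∀ c c' : Tup X j,
      ValidT child j k U c → ValidT child j k U c' →
      chainF tag j k U c = chainF tag j k U c' → c = c' := by
  intro j
  induction j with
  | zero => intro k U _ c c' _ _ _; exact Subsingleton.elim c c'
  | succ j ih =>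
      intro k U hU c c' hv hv' heq
      rw [chainF, chainF] at heq
      have h1a : tag k U c.1 = tag k U c'.1 := List.head_eq_of_cons_eq heq
      have h1b : chainF tag j (k+1) c.1 c.2 = chainF tag j (k+1) c'.1 c'.2 :=
        List.tail_eq_of_cons_eq heq
      have hV : c.1 = c'.1 := htag k U c.1 c'.1 hU hv.1 hv'.1 h1a
      have hv'2 : ValidT child j (k+1) c.1 c'.2 := by
        have := hv'.2; rwa [← hV] at this
      have hgood : good (k+1) c.1 := hclosed k U c.1 hU hv.1
      have h3 : chainF tag j (k+1) c.1 c.2 = chainF tag j (k+1) c.1 c'.2 := by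
        rw [h1b, hV]
      have hC : c.2 = c'.2 := ih (k+1) c.1 hgood c.2 c'.2 hv.2 hv'2 h3
      show (⟨c.1, c.2⟩ : Set X × Tup X j) = (⟨c'.1, c'.2⟩ : Set X × Tup X j)
      rw [hV, hC]

end ChainLemmas

lemma finsum_eq_finsum_mem {ι : Type*} (s : Set ι) (f : ι → ℝ) (h : support f ⊆ s) :
    ∑ᶠ i ∈ s, f i = ∑ᶠ i, f i := by
  rw [finsum_mem_def, Set.indicator_eq_self.2 h]

/-- unconditional nonnegativity of `sigmaF` -/
lemma sigma_nonneg' (C : Set (Set X)) (sk : ℝ) (x : X) : 0 ≤ sigmaF C sk x := by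
  rw [show sigmaF C sk x = ∑ᶠ V ∈ C, bump sk V x from rfl, finsum_mem_def]
  exact finsum_nonneg fun V => Set.indicator_apply_nonneg fun _ => bump_nonneg _ _ _

lemma pF_nonneg (C : Set (Set X)) (sk : ℝ) (V : Set X) (x : X) : 0 ≤ pF C sk V x := by
  classical
  rw [pF]
  split
  · exact div_nonneg (bump_nonneg _ _ _) (sigma_nonneg' C sk x)
  · exact le_refl 0

lemma pF_ne_zero {C : Set (Set X)} {sk : ℝ} {V : Set X} {x : X} (h : pF C sk V x ≠ 0) :
    V ∈ C ∧ infDist x V < sk := by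
  classical
  rw [pF] at h
  by_cases hVC : V ∈ C
  · rw [if_pos hVC] at h
    refine ⟨hVC, bump_pos_iff.1 ?_⟩
    rcases lt_or_eq_of_le (bump_nonneg sk V x) with h' | h'
    · exact h'
    · exact absurd (by rw [← h', zero_div]) h
  · rw [if_neg hVC] at h; exact absurd rfl h

lemma pF_support_subset (C : Set (Set X)) (sk : ℝ) (x : X) :
    support (fun V => pF C sk V x) ⊆ C := fun V hV => (pF_ne_zero hV).1

/-! ### pushf -/

open Classical in
noncomputable def pushf {A B : Type*} (ι : A → B) (f : A → ℝ) : B → ℝ :=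
  fun b => if h : ∃ a, ι a = b then f h.choose else 0

lemma pushf_apply {A B : Type*} {ι : A → B} (hι : Function.Injective ι) (f : A → ℝ) (a : A) :
    pushf ι f (ι a) = f a := by
  classical
  have hex : ∃ a', ι a' = ι a := ⟨a, rfl⟩
  rw [pushf]
  rw [dif_pos hex]
  congr 1
  exact hι hex.choose_spec

lemma pushf_of_not_range {A B : Type*} {ι : A → B} (f : A → ℝ) {b : B}
    (hb : ¬∃ a, ι a = b) : pushf ι f b = 0 := by
  classical
  rw [pushf, dif_neg hb]

lemma pushf_sum {A B : Type*} {ι : A → B} (hι : Function.Injective ι) (f : A → ℝ)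
    (hf : (support f).Finite) : ∑ᶠ b, pushf ι f b = ∑ᶠ a, f a := by
  classical
  have hFs : support (pushf ι f) ⊆ Set.range ι := by
    intro b hb
    simp only [mem_support] at hb
    by_contra hbr
    exact hb (pushf_of_not_range f (fun ⟨a, ha⟩ => hbr ⟨a, ha⟩))
  rw [← finsum_eq_finsum_mem _ _ hFs, finsum_mem_range hι]
  exact finsum_congr fun a => pushf_apply hι f a

lemma pushf_support {A B : Type*} {ι : A → B} (f : A → ℝ) (hf : (support f).Finite) :
    (support (pushf ι f)).Finite := by
  classical
  refine (hf.image ι).subset ?_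
  intro b hb
  simp only [mem_support] at hb
  by_cases hex : ∃ a, ι a = b
  · rw [pushf, dif_pos hex] at hb
    exact ⟨hex.choose, hb, hex.choose_spec⟩
  · exact absurd (pushf_of_not_range f hex) hb

lemma pushf_abs_sub {A B : Type*} {ι : A → B} (f g : A → ℝ) (b : B) :
    |pushf ι f b - pushf ι g b| = pushf ι (fun a => |f a - g a|) b := by
  classical
  by_cases hex : ∃ a, ι a = b
  · rw [pushf, pushf, pushf, dif_pos hex, dif_pos hex, dif_pos hex]
  · rw [pushf_of_not_range f hex, pushf_of_not_range g hex,
      pushf_of_not_range _ hex, sub_zero, abs_zero]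

lemma pushf_nonneg {A B : Type*} {ι : A → B} (f : A → ℝ) (hf : ∀ a, 0 ≤ f a) (b : B) :
    0 ≤ pushf ι f b := by
  classical
  by_cases hex : ∃ a, ι a = b
  · rw [pushf, dif_pos hex]; exact hf _
  · rw [pushf_of_not_range f hex]

/-- sum over the subtype of a set equals the full sum when the support is contained
in the set -/
lemma finsum_subtype_eq {ι : Type*} {s : Set ι} (f : ι → ℝ) (h : support f ⊆ s) :
    ∑ᶠ c : s, f ↑c = ∑ᶠ i, f i := by
  rw [finsum_set_coe_eq_finsum_mem s, finsum_eq_finsum_mem _ _ h]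

end S15


open Function Set Metric

/-- If `X` is of countable asymptotic dimension, then for every set `S`
of cardinality bigger than `card(X × ℕ)` and every `ε > 0` there is an `(ε,ε)`-Lipschitz
partition of unity `g : X → Δ(S)` that is `K`-cobounded for some `K > 0`. -/
theorem stmt15 {X : Type u} [MetricSpace X] (hcad : CountableAsdim X) :
    ∀ S : Type u, Cardinal.mk (X × ℕ) < Cardinal.mk S → ∀ ε > (0:ℝ),
      ∃ g : X → S → ℝ, PartUnityOn g Set.univ ∧ LipschitzEpsOn ε g Set.univ ∧
        ∃ K : ℝ, 0 < K ∧ CoboundedOn K g Set.univ := by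
  classical
  intro S hS ε hε
  rcases isEmpty_or_nonempty X with hX | hX
  · refine ⟨fun _ _ => 0, ?_, ?_, 1, one_pos, ?_⟩
    · intro a _; exact (hX.false a).elim
    · intro x _; exact (hX.false x).elim
    · intro v
      have hempty : {x : X | x ∈ Set.univ ∧ 0 < (fun (_ : X) (_ : S) => (0:ℝ)) x v} = ∅ :=
        Set.eq_empty_of_isEmpty _
      rw [show {x ∈ Set.univ | 0 < (fun (_ : X) (_ : S) => (0:ℝ)) x v} = ∅ from hempty]
      exact Metric.ediam_empty.trans_le (zero_le')
  -- main case
  obtain ⟨n, hn1, hdef⟩ := hcad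
  set d0 : ℝ := 2 / ε with hd0def
  have hd0 : 0 < d0 := by positivity
  have hn1R : ∀ i, (1:ℝ) ≤ (n i : ℝ) := fun i => by exact_mod_cast hn1 i
  set β : ℕ → ℝ := fun i => 2^(i+3) * (n i : ℝ) / ε + d0 with hβdef
  have hβd0 : ∀ i, d0 < β i := by
    intro i
    have hni : (0:ℝ) < (n i : ℝ) := lt_of_lt_of_le zero_lt_one (hn1R i)
    have h1 : 0 < 2^(i+3) * (n i : ℝ) / ε := by positivity
    rw [hβdef]; simp only; linarith
  have hβpos : ∀ i, 0 < β i := fun i => hd0.trans (hβd0 i)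
  set sf : ℕ → ℝ := fun k => ∑ i ∈ Finset.Icc 1 k, β i with hsfdef
  have hs0 : sf 0 = 0 := by rw [hsfdef]; simp
  have hssucc : ∀ k, sf (k+1) = sf k + β (k+1) := by
    intro k; rw [hsfdef]; exact Finset.sum_Icc_succ_top (by omega) β
  have hsnn : ∀ k, 0 ≤ sf k := fun k => Finset.sum_nonneg fun i _ => (hβpos i).le
  have hsmono : ∀ a b : ℕ, a ≤ b → sf a ≤ sf b := fun a b hab =>
    Finset.sum_le_sum_of_subset_of_nonneg (Finset.Icc_subset_Icc_right hab)
      (fun i _ _ => (hβpos i).le)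
  set R : ℕ → ℝ := fun i => 2 * sf i + 1 with hRdef
  have hRpos : ∀ i, 0 < R i := by
    intro i; have := hsnn i; rw [hRdef]; simp only; linarith
  obtain ⟨𝒱, h𝒱1, hdecomp, m, hm1, M, hM0, hMbound⟩ := hdef R hRpos
  obtain ⟨m', rfl⟩ : ∃ m', m = m' + 1 := ⟨m - 1, by omega⟩
  -- choose the children families
  have hch : ∀ k : ℕ, ∀ U : Set X, ∃ CC : Set (Set X) × (Set X → ℕ),
      1 ≤ k → U ∈ 𝒱 k →
        CC.1 ⊆ 𝒱 (k+1) ∧ (∀ V ∈ CC.1, V.Nonempty) ∧ ⋃₀ CC.1 = U ∧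
        (∀ V ∈ CC.1, CC.2 V < n k) ∧
        (∀ V ∈ CC.1, ∀ W ∈ CC.1, V ≠ W → CC.2 V = CC.2 W →
          ∀ v ∈ V, ∀ w ∈ W, R k < dist v w) := by
    intro k U
    by_cases hU : 1 ≤ k ∧ U ∈ 𝒱 k
    · obtain ⟨𝒲, h𝒲, hUeq⟩ := hdecomp k hU.1 U hU.2
      refine ⟨⟨{V | V.Nonempty ∧ ∃ j, V ∈ 𝒲 j},
        fun V => if h : ∃ j : Fin (n k), V ∈ 𝒲 j then (h.choose : Fin (n k)).val else 0⟩,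
        fun _ _ => ?_⟩
      refine ⟨?_, ?_, ?_, ?_, ?_⟩
      · rintro V ⟨hVne, j, hVj⟩; exact (h𝒲 j).1 hVj
      · rintro V ⟨hVne, _⟩; exact hVne
      · apply Set.Subset.antisymm
        · rintro u ⟨V, ⟨hVne, j, hVj⟩, huV⟩
          rw [hUeq]
          exact Set.mem_iUnion.2 ⟨j, V, hVj, huV⟩
        · intro u hu
          rw [hUeq] at hu
          obtain ⟨j, V, hVj, huV⟩ := by
            simpa only [Set.mem_iUnion, Set.mem_sUnion] using hu
          exact ⟨V, ⟨⟨u, huV⟩, j, hVj⟩, huV⟩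
      · rintro V ⟨hVne, hVj⟩
        dsimp only
        rw [dif_pos hVj]; exact (hVj.choose).isLt
      · rintro V ⟨hVne, hVj⟩ W ⟨hWne, hWj⟩ hVW hcol v hv w hw
        dsimp only at hcol
        rw [dif_pos hVj, dif_pos hWj] at hcol
        have hjeq : hVj.choose = hWj.choose := Fin.ext hcol
        have hV' : V ∈ 𝒲 hWj.choose := hjeq ▸ hVj.choose_spec
        exact (h𝒲 hWj.choose).2 V hV' W hWj.choose_spec hVW v hv w hw
    · exact ⟨⟨∅, fun _ => 0⟩, fun h1 h2 => absurd ⟨h1, h2⟩ hU⟩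
  choose CC hCC using hch
  set child : ℕ → Set X → Set (Set X) := fun k U => (CC k U).1 with hchilddef
  set coln : ℕ → Set X → Set X → ℕ := fun k U => (CC k U).2 with hcolndef
  set good : ℕ → Set X → Prop := fun k U => 1 ≤ k ∧ U ∈ 𝒱 k ∧ U.Nonempty with hgooddef
  have hprops : ∀ k U, good k U →
      (child k U ⊆ 𝒱 (k+1)) ∧ (∀ V ∈ child k U, V.Nonempty) ∧ ⋃₀ child k U = U ∧
      (∀ V ∈ child k U, coln k U V < n k) ∧
      (∀ V ∈ child k U, ∀ W ∈ child k U, V ≠ W → coln k U V = coln k U W →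
        ∀ v ∈ V, ∀ w ∈ W, 2 * sf k < dist v w) := by
    intro k U hU
    obtain ⟨h1, h2, h3⟩ := hU
    obtain ⟨a, b, c2, d, e⟩ := hCC k U h1 h2
    refine ⟨a, b, c2, d, fun V hV W hW hVW hc v hv w hw => ?_⟩
    have h5 := e V hV W hW hVW hc v hv w hw
    rw [hRdef] at h5; simp only at h5
    linarith
  have hclosed : ∀ k U V, good k U → V ∈ child k U → good (k+1) V := by
    intro k U V hU hV
    obtain ⟨a, b, -, -, -⟩ := hprops k U hU
    exact ⟨by omega, a hV, b V hV⟩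
  set p : ℕ → Set X → Set X → X → ℝ := fun k U V x => S15.pF (child k U) (sf k) V x with hpdef
  set t : ℕ → ℝ := fun k => sf (k-1) with htdef
  set Λ : ℕ → ℝ := fun k => ε / 2^(k+1) with hΛdef
  set E : ℕ → ℝ := fun k => ε / 2^k with hEdef
  have hp0 : ∀ k U V x, 0 ≤ p k U V x := fun k U V x => S15.pF_nonneg _ _ _ _
  have hp_supp : ∀ (k : ℕ) (U V : Set X) (x : X), p k U V x ≠ 0 →
      V ∈ child k U ∧ infDist x V < sf k := fun k U V x h => S15.pF_ne_zero h
  have hp_fin : ∀ (k : ℕ) (U : Set X) (x : X), good k U →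
      (Function.support (fun V => p k U V x)).Finite := by
    intro k U x hU
    obtain ⟨-, hne, -, hcol, hsep⟩ := hprops k U hU
    refine (S15.active_finite hne hsep hcol x).subset ?_
    intro V hV
    simp only [Function.mem_support] at hV
    exact ⟨(S15.pF_ne_zero hV).1, (S15.pF_ne_zero hV).2⟩
  have hsum_mem : ∀ k U x, ∑ᶠ V, p k U V x = ∑ᶠ V ∈ child k U, S15.pF (child k U) (sf k) V x :=
    fun k U x => (S15.finsum_eq_finsum_mem _ _ (S15.pF_support_subset _ _ _)).symm
  have hp_sum_le : ∀ (k : ℕ) (U : Set X) (x : X), good k U → ∑ᶠ V, p k U V x ≤ 1 := by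
    intro k U x hU
    obtain ⟨-, hne, -, hcol, hsep⟩ := hprops k U hU
    rw [hsum_mem k U x]
    exact S15.sum_p_le_one hne hsep hcol x
  have hsfsplit : ∀ k : ℕ, 1 ≤ k → sf k = sf (k-1) + β k := by
    intro k hk
    obtain ⟨k', rfl⟩ : ∃ k', k = k' + 1 := ⟨k - 1, by omega⟩
    rw [hssucc k']; simp
  have hkeysigma : ∀ (k : ℕ) (U : Set X) (x : X), good k U → infDist x U ≤ t k →
      β k ≤ S15.sigmaF (child k U) (sf k) x := by
    intro k U x hU hx
    obtain ⟨hsub, hne, hcover, hcol, hsep⟩ := hprops k U hU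
    obtain ⟨hk1, hUV, hUne⟩ := hU
    have hsfk := hsfsplit k hk1
    rw [htdef] at hx; simp only at hx
    have hx' : infDist x U < sf k := by rw [hsfk]; linarith [hβpos k]
    have h6 := S15.sigma_ge hne hsep hcol hcover hUne hx'
    linarith
  have hp_sum_eq : ∀ (k : ℕ) (U : Set X) (x : X), good k U → infDist x U ≤ t k →
      ∑ᶠ V, p k U V x = 1 := by
    intro k U x hU hx
    have hσ := lt_of_lt_of_le (hβpos k) (hkeysigma k U x hU hx)
    obtain ⟨-, hne, -, hcol, hsep⟩ := hprops k U hU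
    rw [hsum_mem k U x]
    exact S15.sum_p_eq_one hne hsep hcol hσ
  have hst : ∀ k, sf k ≤ t (k+1) := by
    intro k; rw [htdef]; simp
  have hΛkey : ∀ k, 4 * (n k : ℝ) / β k ≤ Λ k := by
    intro k
    have hb := hβpos k
    have h2p : (0:ℝ) < 2^(k+1) := by positivity
    rw [hΛdef]; simp only
    rw [div_le_div_iff₀ hb h2p]
    have h3 : (2:ℝ)^(k+3) = 4 * 2^(k+1) := by
      rw [show k+3 = (k+1)+2 by omega, pow_add]; ring
    have h2 : ε * (2^(k+3) * (n k : ℝ) / ε) = 2^(k+3) * (n k : ℝ) := by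
      field_simp
    have h1 : ε * β k = 2^(k+3) * (n k : ℝ) + ε * d0 := by
      rw [hβdef]; simp only; rw [mul_add, h2]
    have h4 : 0 < ε * d0 := by positivity
    nlinarith
  have hp_lip : ∀ (k : ℕ) (U : Set X) (x y : X), good k U → dist x y ≤ d0 →
      infDist x U ≤ t k → ∑ᶠ V, |p k U V x - p k U V y| ≤ Λ k * dist x y := by
    intro k U x y hU hdxy hx
    obtain ⟨hsub, hne, hcover, hcol, hsep⟩ := hprops k U hU
    have hσx := hkeysigma k U x hU hx
    have hσy : 0 < S15.sigmaF (child k U) (sf k) y := by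
      obtain ⟨hk1, hUV, hUne⟩ := hU
      have hsfk := hsfsplit k hk1
      have hyx : infDist y U ≤ infDist x U + dist y x :=
        Metric.infDist_le_infDist_add_dist
      rw [htdef] at hx; simp only at hx
      rw [dist_comm y x] at hyx
      have hy' : infDist y U < sf k := by
        rw [hsfk]; have := hβd0 k; linarith
      have h6 := S15.sigma_ge hne hsep hcol hcover hUne hy'
      have := hβd0 k
      linarith
    have hcore := S15.core_lip hne hsep hcol x y (hβpos k) hσx hσy
    have hsupp : Function.support (fun V => |p k U V x - p k U V y|) ⊆ child k U := by
      intro V hV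
      simp only [Function.mem_support] at hV
      by_contra hVC
      have h1 : p k U V x = 0 := by
        by_contra h0; exact hVC (S15.pF_ne_zero h0).1
      have h2 : p k U V x - p k U V y = 0 := by
        by_cases h0 : p k U V y = 0
        · rw [h1, h0, sub_zero]
        · exact absurd (S15.pF_ne_zero h0).1 hVC
      rw [h2, abs_zero] at hV
      exact hV rfl
    calc ∑ᶠ V, |p k U V x - p k U V y|
        = ∑ᶠ V ∈ child k U, |S15.pF (child k U) (sf k) V x - S15.pF (child k U) (sf k) V y| :=
          (S15.finsum_eq_finsum_mem _ _ hsupp).symm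
      _ ≤ (4 * (n k : ℝ) / β k) * dist x y := hcore
      _ ≤ Λ k * dist x y := mul_le_mul_of_nonneg_right (hΛkey k) dist_nonneg
  have hEkey : ∀ k, Λ k + E (k+1) ≤ E k := by
    intro k
    rw [hΛdef, hEdef]; simp only
    have h2 : (2:ℝ)^(k+1) = 2^k * 2 := pow_succ 2 k
    rw [h2]
    rw [← add_div]
    apply le_of_eq
    field_simp
    ring
  have hE0 : ∀ k, 0 ≤ E k := by
    intro k; rw [hEdef]; positivity
  have hgood1 : good 1 Set.univ := by
    refine ⟨le_refl 1, ?_, Set.univ_nonempty⟩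
    rw [h𝒱1]; exact Set.mem_singleton _
  have hinfx : ∀ x : X, infDist x (Set.univ : Set X) ≤ t 1 := by
    intro x
    rw [htdef]; simp only [Nat.sub_self, hs0]
    exact le_of_eq (Metric.infDist_zero_of_mem (Set.mem_univ x))
  -- instantiated chain lemmas
  have Gnn := S15.G_nonneg (p := p) hp0
  have Gfin := S15.G_finsupp (good := good) hclosed hp_supp hp_fin
  have Gsumle := S15.G_sum_le_one hclosed hp0 hp_supp hp_fin hp_sum_le
  have Gsumeq := S15.G_sum_eq_one hclosed hp0 hp_supp hp_fin hp_sum_eq hst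
  have Gvalid := S15.G_valid (child := child) (p := p) (s := sf) hp_supp
  have Glast := S15.last_good (child := child) (good := good) hclosed
  have Gloc := S15.G_last_loc (child := child) (p := p) (s := sf) hp_supp
  have Glip := S15.G_lip hclosed hp0 hp_supp hp_fin hp_sum_le hst hp_lip hEkey hE0
  -- the tag and the embedding into S
  set pt : Set X → X := fun V => if h : V.Nonempty then h.choose else hX.some with hptdef
  have hpt : ∀ V : Set X, V.Nonempty → pt V ∈ V := by
    intro V hV; rw [hptdef]; simp only; rw [dif_pos hV]; exact hV.choose_spec
  set tag : ℕ → Set X → Set X → X × ℕ := fun k U V => (pt V, coln k U V) with htagdef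
  have htag : ∀ k U V W, good k U → V ∈ child k U → W ∈ child k U →
      tag k U V = tag k U W → V = W := by
    intro k U V W hU hV hW heq
    by_contra hVW
    obtain ⟨-, hne, -, -, hsep⟩ := hprops k U hU
    have h1 : pt V = pt W := congrArg Prod.fst heq
    have h2 : coln k U V = coln k U W := congrArg Prod.snd heq
    have h3 := hsep V hV W hW hVW h2 (pt V) (hpt V (hne V hV)) (pt W) (hpt W (hne W hW))
    rw [h1, dist_self] at h3
    linarith [hsnn k]
  have hChainInj : Function.Injective
      (fun c : {c : S15.Tup X m' // S15.ValidT child m' 1 Set.univ c} =>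
        S15.chainF tag m' 1 Set.univ c.1) := by
    intro c c' h
    exact Subtype.ext (S15.chainF_inj hclosed htag m' 1 Set.univ hgood1 c.1 c'.1 c.2 c'.2 h)
  have hcard : Cardinal.mk {c : S15.Tup X m' // S15.ValidT child m' 1 Set.univ c}
      ≤ Cardinal.mk S := by
    have h1 := Cardinal.mk_le_of_injective hChainInj
    have h2 : Cardinal.mk (List (X × ℕ)) = Cardinal.mk (X × ℕ) := Cardinal.mk_list_eq_mk _
    exact le_of_lt (lt_of_le_of_lt (h1.trans_eq h2) hS)
  obtain ⟨ι⟩ := Cardinal.le_def _ _ |>.1 hcard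
  set g : X → S → ℝ := fun x => S15.pushf (⇑ι)
    (fun c : {c : S15.Tup X m' // S15.ValidT child m' 1 Set.univ c} =>
      S15.Gfun p m' 1 Set.univ x c.1) with hgdef
  have hfinsub : ∀ x : X, (Function.support
      (fun c : {c : S15.Tup X m' // S15.ValidT child m' 1 Set.univ c} =>
        S15.Gfun p m' 1 Set.univ x c.1)).Finite := by
    intro x
    have h1 := Gfin m' 1 Set.univ x hgood1
    exact h1.preimage Subtype.val_injective.injOn
  have hsubsum : ∀ x : X,
      (∑ᶠ (c : {c : S15.Tup X m' // S15.ValidT child m' 1 Set.univ c}),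
        S15.Gfun p m' 1 Set.univ x c.1)
      = ∑ᶠ (c : S15.Tup X m'), S15.Gfun p m' 1 Set.univ x c := by
    intro x
    have hsupp : Function.support (fun c => S15.Gfun p m' 1 Set.univ x c)
        ⊆ {c | S15.ValidT child m' 1 Set.univ c} :=
      fun c hc => Gvalid m' 1 Set.univ x c hc
    exact S15.finsum_subtype_eq _ hsupp
  have hpart : PartUnityOn g Set.univ := by
    intro x _
    refine ⟨?_, ?_, ?_⟩
    · intro v
      exact S15.pushf_nonneg _ (fun c : {c : S15.Tup X m' // S15.ValidT child m' 1 Set.univ c} => Gnn m' 1 Set.univ x c.1) v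
    · exact S15.pushf_support _ (hfinsub x)
    · rw [S15.pushf_sum ι.injective _ (hfinsub x), hsubsum x]
      exact Gsumeq m' 1 Set.univ x hgood1 (hinfx x)
  have habsfin : ∀ x y : X, (Function.support
      (fun c : {c : S15.Tup X m' // S15.ValidT child m' 1 Set.univ c} =>
        |S15.Gfun p m' 1 Set.univ x c.1 - S15.Gfun p m' 1 Set.univ y c.1|)).Finite := by
    intro x y
    refine ((hfinsub x).union (hfinsub y)).subset ?_
    intro c hc
    simp only [Function.mem_support, Set.mem_union] at hc ⊢
    by_contra hcon
    push_neg at hcon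
    rw [hcon.1, hcon.2, sub_self, abs_zero] at hc
    exact hc rfl
  have hl1 : ∀ x y : X, l1dist (g x) (g y)
      = ∑ᶠ c : S15.Tup X m', |S15.Gfun p m' 1 Set.univ x c - S15.Gfun p m' 1 Set.univ y c| := by
    intro x y
    have hstep : l1dist (g x) (g y) = ∑ᶠ v : S, S15.pushf (⇑ι)
        (fun c : {c : S15.Tup X m' // S15.ValidT child m' 1 Set.univ c} =>
          |S15.Gfun p m' 1 Set.univ x c.1 - S15.Gfun p m' 1 Set.univ y c.1|) v := by
      refine finsum_congr fun v => ?_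
      exact S15.pushf_abs_sub _ _ v
    rw [hstep, S15.pushf_sum ι.injective _ (habsfin x y)]
    have hsupp : Function.support
        (fun c => |S15.Gfun p m' 1 Set.univ x c - S15.Gfun p m' 1 Set.univ y c|)
        ⊆ {c | S15.ValidT child m' 1 Set.univ c} := by
      intro c hc
      simp only [Function.mem_support] at hc
      by_cases h0 : S15.Gfun p m' 1 Set.univ x c = 0
      · have h1 : S15.Gfun p m' 1 Set.univ y c ≠ 0 := by
          intro h2; rw [h0, h2, sub_self, abs_zero] at hc; exact hc rfl
        exact Gvalid m' 1 Set.univ y c h1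
      · exact Gvalid m' 1 Set.univ x c h0
    exact S15.finsum_subtype_eq _ hsupp
  have hlip : LipschitzEpsOn ε g Set.univ := by
    intro x _ y _
    rw [hl1 x y]
    rcases le_or_gt (dist x y) d0 with hd | hd
    · have h1 := Glip m' 1 Set.univ x y hgood1 hd (hinfx x)
      have h2 : E 1 * dist x y ≤ ε * dist x y + ε := by
        rw [hEdef]; simp only [pow_one]
        nlinarith [dist_nonneg (x := x) (y := y)]
      linarith
    · have h1 : (∑ᶠ c : S15.Tup X m',
          |S15.Gfun p m' 1 Set.univ x c - S15.Gfun p m' 1 Set.univ y c|)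
          ≤ ∑ᶠ c : S15.Tup X m',
            (S15.Gfun p m' 1 Set.univ x c + S15.Gfun p m' 1 Set.univ y c) := by
        refine S15.my_finsum_le ?_ ?_ ?_
        · intro c
          refine (abs_sub _ _).trans ?_
          rw [abs_of_nonneg (Gnn m' 1 Set.univ x c), abs_of_nonneg (Gnn m' 1 Set.univ y c)]
        · refine ((Gfin m' 1 Set.univ x hgood1).union (Gfin m' 1 Set.univ y hgood1)).subset ?_
          intro c hc
          simp only [Function.mem_support, Set.mem_union] at hc ⊢
          by_contra hcon
          push_neg at hcon
          rw [hcon.1, hcon.2, sub_self, abs_zero] at hc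
          exact hc rfl
        · refine ((Gfin m' 1 Set.univ x hgood1).union (Gfin m' 1 Set.univ y hgood1)).subset ?_
          intro c hc
          simp only [Function.mem_support, Set.mem_union] at hc ⊢
          by_contra hcon
          push_neg at hcon
          rw [hcon.1, hcon.2, add_zero] at hc
          exact hc rfl
      have h2 : (∑ᶠ c : S15.Tup X m',
          (S15.Gfun p m' 1 Set.univ x c + S15.Gfun p m' 1 Set.univ y c)) = 2 := by
        rw [finsum_add_distrib (Gfin m' 1 Set.univ x hgood1) (Gfin m' 1 Set.univ y hgood1),
          Gsumeq m' 1 Set.univ x hgood1 (hinfx x), Gsumeq m' 1 Set.univ y hgood1 (hinfx y)]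
        norm_num
      have h3 : (2:ℝ) ≤ ε * dist x y := by
        rw [hd0def] at hd
        have h4 := mul_lt_mul_of_pos_left hd hε
        rw [mul_div_cancel₀ 2 (ne_of_gt hε)] at h4
        linarith
      have h5 : (0:ℝ) < ε := hε
      linarith
  refine ⟨g, hpart, hlip, M + 2 * sf m' + 1, by linarith [hsnn m'], ?_⟩
  intro v
  by_cases hv : ∃ c : {c : S15.Tup X m' // S15.ValidT child m' 1 Set.univ c}, ι c = v
  · obtain ⟨c0, hc0⟩ := hv
    have hgv : ∀ x : X, g x v = S15.Gfun p m' 1 Set.univ x c0.1 := by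
      intro x
      rw [← hc0]
      simp only [hgdef]
      exact S15.pushf_apply ι.injective _ c0
    rcases Nat.eq_zero_or_pos m' with hj | hj
    · subst hj
      have huniv : Set.univ ∈ 𝒱 (0 + 1) := by rw [h𝒱1]; exact Set.mem_singleton _
      have hdu := hMbound Set.univ huniv
      refine le_trans (EMetric.diam_mono (fun x _ => Set.mem_univ x)) (le_trans hdu ?_)
      exact ENNReal.ofReal_le_ofReal (by linarith [hsnn 0])
    · obtain ⟨j', rfl⟩ : ∃ j', m' = j' + 1 := ⟨m' - 1, by omega⟩
      set W : Set X := S15.lastSet (j'+1) Set.univ c0.1 with hWdef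
      have hWgood : good (1 + (j'+1)) W := Glast (j'+1) 1 Set.univ c0.1 hgood1 c0.2
      have h1j0 : 1 + (j'+1) = (j'+1) + 1 := by omega
      rw [h1j0] at hWgood
      obtain ⟨-, hWV, hWne⟩ := hWgood
      have hWd := hMbound W hWV
      have hloc : ∀ x : X, 0 < g x v → infDist x W < sf (j'+1) := by
        intro x hx
        rw [hgv x] at hx
        have hne0 : S15.Gfun p (j'+1) 1 Set.univ x c0.1 ≠ 0 := ne_of_gt hx
        have h6 := Gloc j' 1 Set.univ x c0.1 hne0
        have h7 : (1 + j') = j' + 1 := by omega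
        rw [h7] at h6
        exact h6
      refine EMetric.diam_le ?_
      rintro x ⟨-, hx⟩ y ⟨-, hy⟩
      obtain ⟨wx, hwx, hdwx⟩ := (Metric.infDist_lt_iff hWne).1 (hloc x hx)
      obtain ⟨wy, hwy, hdwy⟩ := (Metric.infDist_lt_iff hWne).1 (hloc y hy)
      have hdw : dist wx wy ≤ M := by
        have h3 := le_trans (EMetric.edist_le_diam_of_mem hwx hwy) hWd
        rw [edist_dist] at h3
        exact (ENNReal.ofReal_le_ofReal_iff hM0.le).1 h3
      have hdxy : dist x y ≤ M + 2 * sf (j'+1) + 1 := by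
        have h8 := dist_triangle4 x wx wy y
        have h9 : dist wy y = dist y wy := dist_comm _ _
        linarith
      rw [edist_dist]
      exact ENNReal.ofReal_le_ofReal hdxy
  · have hempty : {x : X | x ∈ Set.univ ∧ 0 < g x v} = ∅ := by
      ext x
      simp only [Set.mem_setOf_eq, Set.mem_empty_iff_false, iff_false]
      rintro ⟨-, hpos⟩
      simp only [hgdef] at hpos
      rw [S15.pushf_of_not_range _ hv] at hpos
      exact lt_irrefl 0 hpos
    rw [show {x ∈ Set.univ | 0 < g x v} = ∅ from hempty]
    exact Metric.ediam_empty.trans_le (zero_le')
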